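/- Let K be a commutative unital ring, M a K-module, and f a flag of length k in M. Then the group U(f) acts simply transitively on the set of flags transversal to f: for any two flags e and e′ of length k that are both transversal to f, there exists a unique K-linear automorphism u of M satisfying (u − id)(f_i) ⊆ f_{i−1} for all i = 1, …, k and u(e_j) = e′_j for all j = 1, …, k. -/

import Mathlib

/-- A flag of length `k` in the `K`-module `M`: an ascending chain of submodules
`0 = f 0 ⊆ f 1 ⊆ … ⊆ f k = M`. -/
def IsFlag {K M : Type*} [CommRing K] [AddCommGroup M] [Module K M]
    (k : ℕ) (f : ℕ → Submodule K M) : Prop :=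
  f 0 = ⊥ ∧ f k = ⊤ ∧ ∀ i j : ℕ, i ≤ j → j ≤ k → f i ≤ f j

/-- Two flags of length `k` are transversal if `e i` and `f (k - i)` are complementary
for every `i = 0, …, k`. -/
def Transversal {K M : Type*} [CommRing K] [AddCommGroup M] [Module K M]
    (k : ℕ) (e f : ℕ → Submodule K M) : Prop :=
  ∀ i ≤ k, IsCompl (e i) (f (k - i))

section Aux

variable {K M : Type*} [CommRing K] [AddCommGroup M] [Module K M]

/-- The projection onto `p` along `q`, as an endomorphism of `M`. -/
noncomputable def projL (p q : Submodule K M) (h : IsCompl p q) : M →ₗ[K] M :=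
  p.subtype ∘ₗ p.projectionOnto q h

lemma projL_mem (p q : Submodule K M) (h : IsCompl p q) (x : M) : projL p q h x ∈ p :=
  (p.projectionOnto q h x).2

lemma sub_projL_mem (p q : Submodule K M) (h : IsCompl p q) (x : M) :
    x - projL p q h x ∈ q := by
  have h1 := Submodule.projection_add_projection_eq_self h x
  have h2 : x - projL p q h x = (q.projectionOnto p h.symm x : M) := by
    rw [Submodule.coe_projectionOnto_apply, Submodule.projection_eq_self_sub_projection]; rfl
  rw [h2]; exact (q.projectionOnto p h.symm x).2

lemma projL_left (p q : Submodule K M) (h : IsCompl p q) {x : M} (hx : x ∈ p) :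
    projL p q h x = x := by
  have h1 := Submodule.projectionOnto_apply_left h ⟨x, hx⟩
  exact Submodule.projection_apply_of_mem_left h hx

lemma projL_right (p q : Submodule K M) (h : IsCompl p q) {x : M} (hx : x ∈ q) :
    projL p q h x = 0 := by
  simp [projL, Submodule.projectionOnto_apply_of_mem_right h hx]

/-- The unipotent map built from two families of projections. -/
def uMap (k : ℕ) (π π' : ℕ → (M →ₗ[K] M)) : M →ₗ[K] M :=
  ∑ j ∈ Finset.range k, (π' (j + 1)) ∘ₗ (π (j + 1) - π j)

lemma unip_telescope (k : ℕ) (π : ℕ → (M →ₗ[K] M))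
    (hπk : ∀ x, π k x = x) (hπ0 : ∀ x, π 0 x = 0) (x : M) :
    ∑ j ∈ Finset.range k, (π (j + 1) x - π j x) = x := by
  rw [Finset.sum_range_sub (fun j => π j x) k, hπk, hπ0, sub_zero]

variable (k : ℕ) (e e' f : ℕ → Submodule K M) (π π' : ℕ → (M →ₗ[K] M))

lemma unip_keyA
    (hemono : ∀ a b : ℕ, a ≤ b → b ≤ k → e a ≤ e b)
    (hfmono : ∀ a b : ℕ, a ≤ b → b ≤ k → f a ≤ f b)
    (H3 : ∀ i ≤ k, ∀ x ∈ e i, π i x = x)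
    (H4 : ∀ i ≤ k, ∀ x ∈ f (k - i), π i x = 0)
    {i : ℕ} (hi : i < k) {z : M} (hz1 : z ∈ e (i + 1)) (hz2 : z ∈ f (k - i)) :
    uMap k π π' z = π' (i + 1) z := by
  have h0 : ∀ j ∈ Finset.range k, j ≠ i →
      ((π' (j + 1)) ∘ₗ (π (j + 1) - π j)) z = 0 := by
    intro j hj hne
    have hjk := Finset.mem_range.mp hj
    simp only [LinearMap.comp_apply, LinearMap.sub_apply]
    rcases lt_or_gt_of_ne hne with hlt | hgt
    · rw [H4 (j + 1) (by omega) z (hfmono (k - i) (k - (j + 1)) (by omega) (by omega) hz2),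
        H4 j (by omega) z (hfmono (k - i) (k - j) (by omega) (by omega) hz2)]
      simp
    · rw [H3 (j + 1) (by omega) z (hemono (i + 1) (j + 1) (by omega) (by omega) hz1),
        H3 j (by omega) z (hemono (i + 1) j (by omega) (by omega) hz1), sub_self, map_zero]
  unfold uMap
  rw [LinearMap.sum_apply, Finset.sum_eq_single_of_mem i (Finset.mem_range.mpr hi) h0]
  simp only [LinearMap.comp_apply, LinearMap.sub_apply]
  rw [H3 (i + 1) hi z hz1, H4 i (by omega) z hz2, sub_zero]

lemma unip_maps
    (hemono : ∀ a b : ℕ, a ≤ b → b ≤ k → e a ≤ e b)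
    (he'mono : ∀ a b : ℕ, a ≤ b → b ≤ k → e' a ≤ e' b)
    (H3 : ∀ i ≤ k, ∀ x ∈ e i, π i x = x)
    (H1' : ∀ i ≤ k, ∀ x, π' i x ∈ e' i)
    {j : ℕ} (hj : j ≤ k) {x : M} (hx : x ∈ e j) :
    uMap k π π' x ∈ e' j := by
  unfold uMap
  rw [LinearMap.sum_apply]
  refine Submodule.sum_mem _ fun i hi => ?_
  have hik := Finset.mem_range.mp hi
  simp only [LinearMap.comp_apply, LinearMap.sub_apply]
  rcases le_or_gt (i + 1) j with h | h
  · exact he'mono (i + 1) j h hj (H1' (i + 1) (by omega) _)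
  · rw [H3 (i + 1) hik x (hemono j (i + 1) (by omega) hik hx),
      H3 i (by omega) x (hemono j i (by omega) (by omega) hx), sub_self, map_zero]
    exact Submodule.zero_mem _

lemma unip_unipotent
    (hfmono : ∀ a b : ℕ, a ≤ b → b ≤ k → f a ≤ f b)
    (H4 : ∀ i ≤ k, ∀ x ∈ f (k - i), π i x = 0)
    (H2' : ∀ i ≤ k, ∀ x : M, x - π' i x ∈ f (k - i))
    (hπk : ∀ x, π k x = x) (hπ0 : ∀ x, π 0 x = 0)
    {m : ℕ} (hm1 : 1 ≤ m) (hmk : m ≤ k) {x : M} (hx : x ∈ f m) :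
    uMap k π π' x - x ∈ f (m - 1) := by
  have htel := unip_telescope k π hπk hπ0 x
  have h1 : uMap k π π' x = ∑ j ∈ Finset.range k, π' (j + 1) (π (j + 1) x - π j x) := by
    unfold uMap; rw [LinearMap.sum_apply]; rfl
  have h2 : uMap k π π' x - x
      = ∑ j ∈ Finset.range k, (π' (j + 1) (π (j + 1) x - π j x) - (π (j + 1) x - π j x)) := by
    rw [Finset.sum_sub_distrib, htel, h1]
  rw [h2]
  refine Submodule.sum_mem _ fun j hj => ?_
  have hjk := Finset.mem_range.mp hj
  rcases lt_or_ge j (k - m) with h | h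
  · rw [H4 (j + 1) (by omega) x (hfmono m (k - (j + 1)) (by omega) (by omega) hx),
      H4 j (by omega) x (hfmono m (k - j) (by omega) (by omega) hx)]
    simp
  · have hmem : π' (j + 1) (π (j + 1) x - π j x) - (π (j + 1) x - π j x) ∈ f (k - (j + 1)) := by
      have hn := Submodule.neg_mem _ (H2' (j + 1) (by omega) (π (j + 1) x - π j x))
      simpa [neg_sub] using hn
    exact hfmono (k - (j + 1)) (m - 1) (by omega) (by omega) hmem

lemma unip_keyB
    (hemono : ∀ a b : ℕ, a ≤ b → b ≤ k → e a ≤ e b)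
    (hfmono : ∀ a b : ℕ, a ≤ b → b ≤ k → f a ≤ f b)
    (H1 : ∀ i ≤ k, ∀ x, π i x ∈ e i)
    (H2 : ∀ i ≤ k, ∀ x : M, x - π i x ∈ f (k - i))
    (H3 : ∀ i ≤ k, ∀ x ∈ e i, π i x = x)
    (H4 : ∀ i ≤ k, ∀ x ∈ f (k - i), π i x = 0)
    (H3' : ∀ i ≤ k, ∀ x ∈ e' i, π' i x = x)
    (H4' : ∀ i ≤ k, ∀ x ∈ f (k - i), π' i x = 0)
    {i : ℕ} (hi : i < k) {z : M} (hz1 : z ∈ e' (i + 1)) (hz2 : z ∈ f (k - i)) :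
    uMap k π π' (π (i + 1) z) = z := by
  have hw1 : π (i + 1) z ∈ e (i + 1) := H1 (i + 1) hi z
  have hw2 : π (i + 1) z ∈ f (k - i) := by
    have h2 := H2 (i + 1) hi z
    have h3 : π (i + 1) z = z - (z - π (i + 1) z) := (sub_sub_cancel z (π (i + 1) z)).symm
    rw [h3]
    exact Submodule.sub_mem _ hz2 (hfmono (k - (i + 1)) (k - i) (by omega) (by omega) h2)
  rw [unip_keyA k e f π π' hemono hfmono H3 H4 hi hw1 hw2]
  have e1 : π' (i + 1) (π (i + 1) z) = π' (i + 1) z - π' (i + 1) (z - π (i + 1) z) := by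
    rw [← map_sub]; congr 1; rw [sub_sub_cancel]
  rw [e1, H3' (i + 1) hi z hz1, H4' (i + 1) hi _ (H2 (i + 1) hi z), sub_zero]

lemma unip_inv
    (hemono : ∀ a b : ℕ, a ≤ b → b ≤ k → e a ≤ e b)
    (hfmono : ∀ a b : ℕ, a ≤ b → b ≤ k → f a ≤ f b)
    (he'mono : ∀ a b : ℕ, a ≤ b → b ≤ k → e' a ≤ e' b)
    (H1 : ∀ i ≤ k, ∀ x, π i x ∈ e i)
    (H2 : ∀ i ≤ k, ∀ x : M, x - π i x ∈ f (k - i))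
    (H3 : ∀ i ≤ k, ∀ x ∈ e i, π i x = x)
    (H4 : ∀ i ≤ k, ∀ x ∈ f (k - i), π i x = 0)
    (H1' : ∀ i ≤ k, ∀ x, π' i x ∈ e' i)
    (H2' : ∀ i ≤ k, ∀ x : M, x - π' i x ∈ f (k - i))
    (H3' : ∀ i ≤ k, ∀ x ∈ e' i, π' i x = x)
    (H4' : ∀ i ≤ k, ∀ x ∈ f (k - i), π' i x = 0)
    (hπ'k : ∀ x, π' k x = x) (hπ'0 : ∀ x, π' 0 x = 0) (x : M) :
    uMap k π π' (uMap k π' π x) = x := by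
  have h1 : uMap k π' π x = ∑ j ∈ Finset.range k, π (j + 1) (π' (j + 1) x - π' j x) := by
    unfold uMap; rw [LinearMap.sum_apply]; rfl
  rw [h1, map_sum]
  have hterm : ∀ j ∈ Finset.range k,
      uMap k π π' (π (j + 1) (π' (j + 1) x - π' j x)) = π' (j + 1) x - π' j x := by
    intro j hj
    have hjk := Finset.mem_range.mp hj
    refine unip_keyB k e e' f π π' hemono hfmono H1 H2 H3 H4 H3' H4' hjk ?_ ?_
    · exact Submodule.sub_mem _ (H1' (j + 1) hjk x)
        (he'mono j (j + 1) (by omega) hjk (H1' j (by omega) x))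
    · have a1 := H2' j (by omega) x
      have a2 := H2' (j + 1) hjk x
      have hz : π' (j + 1) x - π' j x = (x - π' j x) - (x - π' (j + 1) x) := by abel
      rw [hz]
      exact Submodule.sub_mem _ a1 (hfmono (k - (j + 1)) (k - j) (by omega) (by omega) a2)
  rw [Finset.sum_congr rfl hterm, unip_telescope k π' hπ'k hπ'0 x]

end Aux

/-- The group `U(f)` acts simply transitively on the set of flags transversal to `f`:
given flags `e`, `e'` both transversal to `f`, there is a unique automorphism `u` of `M`
with `(u - id)(f i) ⊆ f (i-1)` for `i = 1, …, k` mapping `e` to `e'`. -/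
theorem unipotent_group_simply_transitive
    {K M : Type*} [CommRing K] [AddCommGroup M] [Module K M]
    (k : ℕ) (f e e' : ℕ → Submodule K M)
    (hf : IsFlag k f) (he : IsFlag k e) (he' : IsFlag k e')
    (hef : Transversal k e f) (he'f : Transversal k e' f) :
    ∃! u : M ≃ₗ[K] M,
      (∀ i : ℕ, 1 ≤ i → i ≤ k →
        Submodule.map ((u : M →ₗ[K] M) - LinearMap.id) (f i) ≤ f (i - 1)) ∧
      (∀ j ≤ k, Submodule.map (u : M →ₗ[K] M) (e j) = e' j) := by
  classical
  obtain ⟨hf0, hfk, hfmono⟩ := hf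
  obtain ⟨he0, hek, hemono⟩ := he
  obtain ⟨he'0, he'k, he'mono⟩ := he'
  have hef' : ∀ i ≤ k, IsCompl (e i) (f (k - i)) := hef
  have he'f' : ∀ i ≤ k, IsCompl (e' i) (f (k - i)) := he'f
  set π : ℕ → (M →ₗ[K] M) :=
    fun i => if h : i ≤ k then projL (e i) (f (k - i)) (hef' i h) else 0 with hπdef
  set π' : ℕ → (M →ₗ[K] M) :=
    fun i => if h : i ≤ k then projL (e' i) (f (k - i)) (he'f' i h) else 0 with hπ'def
  have H1 : ∀ i ≤ k, ∀ x, π i x ∈ e i := by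
    intro i hi x; simp only [hπdef]; rw [dif_pos hi]; exact projL_mem _ _ _ x
  have H2 : ∀ i ≤ k, ∀ x : M, x - π i x ∈ f (k - i) := by
    intro i hi x; simp only [hπdef]; rw [dif_pos hi]; exact sub_projL_mem _ _ _ x
  have H3 : ∀ i ≤ k, ∀ x ∈ e i, π i x = x := by
    intro i hi x hx; simp only [hπdef]; rw [dif_pos hi]; exact projL_left _ _ _ hx
  have H4 : ∀ i ≤ k, ∀ x ∈ f (k - i), π i x = 0 := by
    intro i hi x hx; simp only [hπdef]; rw [dif_pos hi]; exact projL_right _ _ _ hx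
  have H1' : ∀ i ≤ k, ∀ x, π' i x ∈ e' i := by
    intro i hi x; simp only [hπ'def]; rw [dif_pos hi]; exact projL_mem _ _ _ x
  have H2' : ∀ i ≤ k, ∀ x : M, x - π' i x ∈ f (k - i) := by
    intro i hi x; simp only [hπ'def]; rw [dif_pos hi]; exact sub_projL_mem _ _ _ x
  have H3' : ∀ i ≤ k, ∀ x ∈ e' i, π' i x = x := by
    intro i hi x hx; simp only [hπ'def]; rw [dif_pos hi]; exact projL_left _ _ _ hx
  have H4' : ∀ i ≤ k, ∀ x ∈ f (k - i), π' i x = 0 := by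
    intro i hi x hx; simp only [hπ'def]; rw [dif_pos hi]; exact projL_right _ _ _ hx
  have hπk : ∀ x, π k x = x := by
    intro x
    have h2 := H2 k le_rfl x
    rw [Nat.sub_self, hf0, Submodule.mem_bot] at h2
    exact (sub_eq_zero.mp h2).symm
  have hπ0 : ∀ x, π 0 x = 0 := by
    intro x
    have h1 := H1 0 (Nat.zero_le k) x
    rwa [he0, Submodule.mem_bot] at h1
  have hπ'k : ∀ x, π' k x = x := by
    intro x
    have h2 := H2' k le_rfl x
    rw [Nat.sub_self, hf0, Submodule.mem_bot] at h2
    exact (sub_eq_zero.mp h2).symm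
  have hπ'0 : ∀ x, π' 0 x = 0 := by
    intro x
    have h1 := H1' 0 (Nat.zero_le k) x
    rwa [he'0, Submodule.mem_bot] at h1
  have huv : ∀ x, uMap k π π' (uMap k π' π x) = x :=
    unip_inv k e e' f π π' hemono hfmono he'mono H1 H2 H3 H4 H1' H2' H3' H4' hπ'k hπ'0
  have hvu : ∀ x, uMap k π' π (uMap k π π' x) = x :=
    unip_inv k e' e f π' π he'mono hfmono hemono H1' H2' H3' H4' H1 H2 H3 H4 hπk hπ0
  refine ⟨LinearEquiv.ofLinear (uMap k π π') (uMap k π' π)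
      (LinearMap.ext fun x => huv x) (LinearMap.ext fun x => hvu x), ⟨?_, ?_⟩, ?_⟩
  · intro i h1i hik
    intro y hy
    rw [Submodule.mem_map] at hy
    obtain ⟨x, hx, rfl⟩ := hy
    have hmem := unip_unipotent k f π π' hfmono H4 H2' hπk hπ0 h1i hik hx
    simpa using hmem
  · intro j hj
    apply le_antisymm
    · intro y hy
      rw [Submodule.mem_map] at hy
      obtain ⟨x, hx, rfl⟩ := hy
      have hmem := unip_maps k e e' π π' hemono he'mono H3 H1' hj hx
      simpa using hmem
    · intro y hy
      rw [Submodule.mem_map]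
      refine ⟨uMap k π' π y, unip_maps k e' e π' π he'mono hemono H3' H1 hj hy, ?_⟩
      simpa using huv y
  · rintro w ⟨hw1, hw2⟩
    apply LinearEquiv.toLinearMap_injective
    apply LinearMap.ext
    intro x
    have htel := unip_telescope k π hπk hπ0 x
    have key : ∀ j ∈ Finset.range k,
        (w : M →ₗ[K] M) (π (j + 1) x - π j x) = uMap k π π' (π (j + 1) x - π j x) := by
      intro j hj
      have hjk := Finset.mem_range.mp hj
      set z := π (j + 1) x - π j x with hzdef
      have hz1 : z ∈ e (j + 1) :=
        Submodule.sub_mem _ (H1 (j + 1) hjk x)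
          (hemono j (j + 1) (by omega) hjk (H1 j (by omega) x))
      have hz2 : z ∈ f (k - j) := by
        have a1 := H2 j (by omega) x
        have a2 := H2 (j + 1) hjk x
        have hz : z = (x - π j x) - (x - π (j + 1) x) := by rw [hzdef]; abel
        rw [hz]
        exact Submodule.sub_mem _ a1 (hfmono (k - (j + 1)) (k - j) (by omega) (by omega) a2)
      have hu0z : uMap k π π' z = π' (j + 1) z :=
        unip_keyA k e f π π' hemono hfmono H3 H4 hjk hz1 hz2
      have hwz1 : (w : M →ₗ[K] M) z ∈ e' (j + 1) := by
        rw [← hw2 (j + 1) hjk]; exact Submodule.mem_map_of_mem hz1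
      have hwz2 : (w : M →ₗ[K] M) z - z ∈ f (k - (j + 1)) := by
        have hm := hw1 (k - j) (by omega) (by omega)
        have hmem : (w : M →ₗ[K] M) z - z
            ∈ Submodule.map ((w : M →ₗ[K] M) - LinearMap.id) (f (k - j)) := by
          refine ⟨z, hz2, ?_⟩
          simp
        have h2 := hm hmem
        simpa [Nat.sub_sub] using h2
      have huz2 : uMap k π π' z - z ∈ f (k - (j + 1)) := by
        rw [hu0z]
        have hn := Submodule.neg_mem _ (H2' (j + 1) hjk z)
        simpa [neg_sub] using hn
      have hdiff : (w : M →ₗ[K] M) z - uMap k π π' z ∈ f (k - (j + 1)) := by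
        have hd : (w : M →ₗ[K] M) z - uMap k π π' z
            = ((w : M →ₗ[K] M) z - z) - (uMap k π π' z - z) := by abel
        rw [hd]
        exact Submodule.sub_mem _ hwz2 huz2
      have hdiff' : (w : M →ₗ[K] M) z - uMap k π π' z ∈ e' (j + 1) :=
        Submodule.sub_mem _ hwz1 (hu0z ▸ H1' (j + 1) hjk z)
      have hzero : (w : M →ₗ[K] M) z - uMap k π π' z = 0 :=
        Submodule.disjoint_def.mp (he'f' (j + 1) hjk).disjoint _ hdiff' hdiff
      exact sub_eq_zero.mp hzero
    show (w : M →ₗ[K] M) x = uMap k π π' x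
    calc (w : M →ₗ[K] M) x
        = (w : M →ₗ[K] M) (∑ j ∈ Finset.range k, (π (j + 1) x - π j x)) := by rw [htel]
      _ = ∑ j ∈ Finset.range k, (w : M →ₗ[K] M) (π (j + 1) x - π j x) := map_sum _ _ _
      _ = ∑ j ∈ Finset.range k, uMap k π π' (π (j + 1) x - π j x) :=
          Finset.sum_congr rfl key
      _ = uMap k π π' (∑ j ∈ Finset.range k, (π (j + 1) x - π j x)) := (map_sum _ _ _).symm
      _ = uMap k π π' x := by rw [htel]
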